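/- If π/8 < β/δ < (1/4)(1+π/4), then F(z) = 1 - 2βz + (δ/2)[z²/(z²+1) + z·arctan(z)] has a unique local minimum in (0,1) and a unique local maximum in (1,∞), and F(z) → -∞ as z → ∞. -/

import Mathlib

open Real Set Filter

set_option maxHeartbeats 2000000 in
/-- if π/8 < β/δ < (1/4)(1+π/4) then F has a unique local minimum
in (0,1), a unique local maximum in (1,∞), and F(z) → -∞ as z → ∞. -/
theorem stmt_4 (β δ : ℝ) (hβ : 0 < β) (hδ : 0 < δ)
    (hlo : Real.pi/8 < β/δ) (hhi : β/δ < (1/4) * (1 + Real.pi/4))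
    (F : ℝ → ℝ)
    (hF : ∀ z, F z = 1 - 2*β*z + (δ/2) * (z^2/(z^2+1) + z * Real.arctan z)) :
    (∃! z : ℝ, z ∈ Set.Ioo (0:ℝ) 1 ∧ IsLocalMin F z) ∧
    (∃! z : ℝ, z ∈ Set.Ioi (1:ℝ) ∧ IsLocalMax F z) ∧
    Tendsto F atTop atBot := by
  have hπ := Real.pi_pos
  have hlo' : Real.pi/8 * δ < β := by
    have := (div_lt_div_iff₀ (by norm_num : (0:ℝ) < 8) hδ).mp hlo
    nlinarith
  have hhi' : β < δ * ((1/4) * (1 + Real.pi/4)) := by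
    have := (div_lt_iff₀ hδ).mp hhi
    nlinarith
  set c : ℝ := 2*β - δ*Real.pi/4 with hcdef
  clear_value c
  have hc0 : 0 < c := by simp only [hcdef]; nlinarith
  have hcδ : c < δ/2 := by simp only [hcdef]; nlinarith
  set f' : ℝ → ℝ := fun z => -(2*β) + δ/2 * ((3*z + z^3)/(z^2+1)^2 + arctan z) with hf'def
  clear_value f'
  -- derivative of F
  have hd : ∀ z : ℝ, HasDerivAt F (f' z) z := by
    intro z
    have hz : z^2 + 1 ≠ 0 := by positivity
    have hsq : HasDerivAt (fun z : ℝ => z^2) (2*z) z := by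
      simpa using hasDerivAt_pow 2 z
    have h1 : HasDerivAt (fun z : ℝ => z^2/(z^2+1))
        ((2*z*(z^2+1) - z^2*(2*z))/((z^2+1)^2)) z :=
      hsq.div (hsq.add_const 1) hz
    have h2 : HasDerivAt (fun z : ℝ => z * arctan z)
        (arctan z + z * (1/(z^2+1))) z := by
      have := (hasDerivAt_id z).mul (hasDerivAt_arctan z)
      refine this.congr_deriv ?_
      simp only [id_eq]
      rw [add_comm (z^2) 1]; ring
    have h3 := (h1.add h2).const_mul (δ/2)
    have hlin : HasDerivAt (fun z : ℝ => 1 - 2*β*z) (-(2*β)) z := by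
      simpa using ((hasDerivAt_id z).const_mul (2*β)).const_sub 1
    have htot := hlin.add h3
    have hFeq : F = fun z => 1 - 2*β*z + δ/2 * (z^2/(z^2+1) + z * arctan z) := by
      funext x; rw [hF x]
    rw [hFeq]
    refine htot.congr_deriv ?_
    rw [hf'def]
    field_simp
    ring
  -- derivative of f'
  have hd2 : ∀ z : ℝ, HasDerivAt f' (2*δ*(1-z^2)/(z^2+1)^3) z := by
    intro z
    have hz : z^2 + 1 ≠ 0 := by positivity
    have hz2 : (z^2+1)^2 ≠ 0 := pow_ne_zero 2 hz
    have hsq : HasDerivAt (fun z : ℝ => z^2) (2*z) z := by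
      simpa using hasDerivAt_pow 2 z
    have hnum : HasDerivAt (fun z : ℝ => 3*z + z^3) (3 + 3*z^2) z := by
      have h1 : HasDerivAt (fun z : ℝ => z^3) (3*z^2) z := by
        simpa using hasDerivAt_pow 3 z
      exact (((hasDerivAt_id z).const_mul 3).add h1).congr_deriv (by ring)
    have hden : HasDerivAt (fun z : ℝ => (z^2+1)^2)
        ((2:ℕ) * (z^2+1)^(2-1) * (2*z)) z := (hsq.add_const 1).pow 2
    have hquot := hnum.div hden hz2
    have harc : HasDerivAt arctan (1/(z^2+1)) z := by
      have := hasDerivAt_arctan z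
      convert this using 1
      rw [add_comm (z^2) 1]
    have htot := ((hquot.add harc).const_mul (δ/2)).const_add (-(2*β))
    rw [hf'def]
    refine htot.congr_deriv ?_
    field_simp
    ring
  have hcont : Continuous f' := continuous_iff_continuousAt.2 fun x => (hd2 x).continuousAt
  have hcontF : Continuous F := continuous_iff_continuousAt.2 fun x => (hd x).continuousAt
  have hderiv2 : ∀ x, deriv f' x = 2*δ*(1-x^2)/(x^2+1)^3 := fun x => (hd2 x).deriv
  have hderivF : ∀ x, deriv F x = f' x := fun x => (hd x).deriv
  -- monotonicity of f'
  have mono1 : StrictMonoOn f' (Icc 0 1) := by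
    apply strictMonoOn_of_deriv_pos (convex_Icc 0 1) hcont.continuousOn
    intro x hx
    rw [interior_Icc] at hx
    rw [hderiv2]
    have hx2 : x^2 < 1 := by nlinarith [hx.1, hx.2]
    apply div_pos
    · nlinarith
    · positivity
  have anti1 : StrictAntiOn f' (Ici 1) := by
    apply strictAntiOn_of_deriv_neg (convex_Ici 1) hcont.continuousOn
    intro x hx
    rw [interior_Ici] at hx
    rw [hderiv2]
    have hx2 : 1 < x^2 := by nlinarith [hx.out]
    apply div_neg_of_neg_of_pos
    · nlinarith
    · positivity
  -- values of f'
  have hf'0 : f' 0 = -(2*β) := by rw [hf'def]; norm_num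
  have hf'0neg : f' 0 < 0 := by rw [hf'0]; linarith
  have hf'1 : 0 < f' 1 := by
    rw [hf'def]
    simp only [Real.arctan_one]
    nlinarith
  set N : ℝ := 8*δ/c with hNdef
  clear_value N
  have hN1 : 1 < N := by
    rw [hNdef, lt_div_iff₀ hc0]
    nlinarith
  have hN0 : 0 < N := by linarith
  have hf'N : f' N < 0 := by
    have hq : (3*N + N^3)/(N^2+1)^2 ≤ 4/N := by
      rw [div_le_div_iff₀ (by positivity) hN0]
      nlinarith [sq_nonneg N, sq_nonneg (N^2-1)]
    have ha : arctan N < Real.pi/2 := Real.arctan_lt_pi_div_two N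
    have h4N : 4/N = c/(2*δ) := by
      rw [hNdef]; field_simp; ring
    have hkey : f' N < -(2*β) + δ/2 * (4/N + Real.pi/2) := by
      rw [hf'def]
      simp only
      have := mul_lt_mul_of_pos_left (add_lt_add_of_le_of_lt hq ha)
        (by positivity : (0:ℝ) < δ/2)
      linarith
    rw [h4N] at hkey
    have : -(2*β) + δ/2 * (c/(2*δ) + Real.pi/2) = -(3/4)*c := by
      simp only [hcdef]
      field_simp
      ring
    rw [this] at hkey
    linarith
  -- zeros of f'
  obtain ⟨z₁, hz₁mem, hz₁⟩ : ∃ z₁ ∈ Ioo (0:ℝ) 1, f' z₁ = 0 := by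
    have := intermediate_value_Ioo (by norm_num : (0:ℝ) ≤ 1) hcont.continuousOn
      (by exact ⟨hf'0neg, hf'1⟩ : (0:ℝ) ∈ Ioo (f' 0) (f' 1))
    obtain ⟨z, hz, hz'⟩ := this
    exact ⟨z, hz, hz'⟩
  obtain ⟨z₂, hz₂mem, hz₂⟩ : ∃ z₂ ∈ Ioo (1:ℝ) N, f' z₂ = 0 := by
    have := intermediate_value_Ioo' hN1.le hcont.continuousOn
      (by exact ⟨hf'N, hf'1⟩ : (0:ℝ) ∈ Ioo (f' N) (f' 1))
    obtain ⟨z, hz, hz'⟩ := this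
    exact ⟨z, hz, hz'⟩
  -- sign of f' around z₁
  have hz₁Icc : z₁ ∈ Icc (0:ℝ) 1 := ⟨hz₁mem.1.le, hz₁mem.2.le⟩
  have hz₂Ici : z₂ ∈ Ici (1:ℝ) := hz₂mem.1.le
  -- monotonicity of F
  have SA : StrictAntiOn F (Icc 0 z₁) := by
    apply strictAntiOn_of_deriv_neg (convex_Icc 0 z₁) hcontF.continuousOn
    intro x hx
    rw [interior_Icc] at hx
    rw [hderivF]
    have := mono1 ⟨hx.1.le, hx.2.le.trans hz₁mem.2.le⟩ hz₁Icc hx.2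
    rw [hz₁] at this; exact this
  have SM : StrictMonoOn F (Icc z₁ 1) := by
    apply strictMonoOn_of_deriv_pos (convex_Icc z₁ 1) hcontF.continuousOn
    intro x hx
    rw [interior_Icc] at hx
    rw [hderivF]
    have := mono1 hz₁Icc ⟨(hz₁mem.1.trans hx.1).le, hx.2.le⟩ hx.1
    rw [hz₁] at this; exact this
  have SM2 : StrictMonoOn F (Icc 1 z₂) := by
    apply strictMonoOn_of_deriv_pos (convex_Icc 1 z₂) hcontF.continuousOn
    intro x hx
    rw [interior_Icc] at hx
    rw [hderivF]
    have := anti1 hx.1.le hz₂Ici hx.2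
    rw [hz₂] at this; exact this
  have SA2 : StrictAntiOn F (Ici z₂) := by
    apply strictAntiOn_of_deriv_neg (convex_Ici z₂) hcontF.continuousOn
    intro x hx
    rw [interior_Ici] at hx
    rw [hderivF]
    have := anti1 hz₂Ici (hz₂mem.1.trans hx).le hx
    rw [hz₂] at this; exact this
  refine ⟨⟨z₁, ⟨hz₁mem, ?_⟩, ?_⟩, ⟨z₂, ⟨hz₂mem.1, ?_⟩, ?_⟩, ?_⟩
  · -- IsLocalMin F z₁
    filter_upwards [isOpen_Ioo.mem_nhds hz₁mem] with x hx
    rcases lt_trichotomy x z₁ with h | h | h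
    · exact (SA ⟨hx.1.le, h.le⟩ ⟨hz₁mem.1.le, le_refl z₁⟩ h).le
    · rw [h]
    · exact (SM ⟨le_refl z₁, hz₁mem.2.le⟩ ⟨h.le, hx.2.le⟩ h).le
  · -- uniqueness of local min
    rintro y ⟨hy, hmin⟩
    have h0 : f' y = 0 := hmin.hasDerivAt_eq_zero (hd y)
    exact mono1.injOn ⟨hy.1.le, hy.2.le⟩ hz₁Icc (h0.trans hz₁.symm)
  · -- IsLocalMax F z₂
    filter_upwards [isOpen_Ioi.mem_nhds hz₂mem.1] with x hx
    rcases lt_trichotomy x z₂ with h | h | h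
    · exact (SM2 ⟨le_of_lt hx, h.le⟩ ⟨hz₂Ici, le_refl _⟩ h).le
    · rw [h]
    · exact (SA2 (self_mem_Ici) (h.le : z₂ ≤ x) h).le
  · -- uniqueness of local max
    rintro y ⟨hy, hmax⟩
    have h0 : f' y = 0 := hmax.hasDerivAt_eq_zero (hd y)
    exact anti1.injOn (show y ∈ Ici (1:ℝ) from le_of_lt (show (1:ℝ) < y from hy)) hz₂Ici (h0.trans hz₂.symm)
  · -- Tendsto F atTop atBot
    have hneg : δ*Real.pi/4 - 2*β < 0 := by linarith
    have hlin : Tendsto (fun z : ℝ => 1 + δ/2 + (δ*Real.pi/4 - 2*β)*z) atTop atBot := by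
      apply tendsto_atBot_add_const_left
      exact Tendsto.const_mul_atTop_of_neg hneg tendsto_id
    apply tendsto_atBot_mono' atTop _ hlin
    filter_upwards [eventually_ge_atTop (0:ℝ)] with z hz
    rw [hF z]
    have h1 : z^2/(z^2+1) ≤ 1 := by
      rw [div_le_one (by positivity)]; linarith
    have h2 : z * arctan z ≤ z * (Real.pi/2) :=
      mul_le_mul_of_nonneg_left (Real.arctan_lt_pi_div_two z).le hz
    have key : δ/2*(z^2/(z^2+1) + z * arctan z) ≤ δ/2*(1 + z*(Real.pi/2)) :=
      mul_le_mul_of_nonneg_left (add_le_add h1 h2) (by positivity)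
    linarith
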